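/- For d ≥ 2, if G is a claw-free, d-regular graph, then α(G) ≤ 2·((d+1)/(d+2))·γ(G). -/

import Mathlib

open Finset

variable {V : Type*}

/-- A finset is independent in `G` : no two of its vertices are adjacent. -/
def IsIndepFinset (G : SimpleGraph V) (S : Finset V) : Prop :=
  ∀ u ∈ S, ∀ v ∈ S, ¬ G.Adj u v

/-- A finset dominates `G` : every vertex outside it has a neighbour inside it. -/
def IsDomFinset (G : SimpleGraph V) (D : Finset V) : Prop :=
  ∀ v, v ∉ D → ∃ u ∈ D, G.Adj u v

/-- The independence number of `G`. -/
noncomputable def indepNum [Fintype V] (G : SimpleGraph V) : ℕ :=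
  sSup {n | ∃ S : Finset V, IsIndepFinset G S ∧ S.card = n}

/-- The domination number of `G`. -/
noncomputable def domNum [Fintype V] (G : SimpleGraph V) : ℕ :=
  sInf {n | ∃ D : Finset V, IsDomFinset G D ∧ D.card = n}

/-- `G` is `K_{1,r}`-free: no vertex has `r` pairwise nonadjacent neighbours. -/
def K1rFree (G : SimpleGraph V) (r : ℕ) : Prop :=
  ¬ ∃ (v : V) (A : Finset V), (∀ a ∈ A, G.Adj v a) ∧
      (∀ a ∈ A, ∀ b ∈ A, a ≠ b → ¬ G.Adj a b) ∧ A.card = r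

/-- For d ≥ 2, a claw-free d-regular graph satisfies
α(G) ≤ 2·((d+1)/(d+2))·γ(G), i.e. (d+2)·α(G) ≤ 2(d+1)·γ(G). -/
theorem stmt6 [Fintype V] (G : SimpleGraph V) [DecidableRel G.Adj] (d : ℕ) (hd : 2 ≤ d)
    (hreg : G.IsRegularOfDegree d) (hG : K1rFree G 3) :
    (d + 2) * indepNum G ≤ 2 * (d + 1) * domNum G := by
  classical
  obtain ⟨S, hS, hScard⟩ : ∃ S : Finset V, IsIndepFinset G S ∧ S.card = indepNum G := by
    have hne : {m | ∃ S : Finset V, IsIndepFinset G S ∧ S.card = m}.Nonempty :=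
      ⟨0, ∅, fun u hu => absurd hu (notMem_empty u), card_empty⟩
    have hbdd : BddAbove {m | ∃ S : Finset V, IsIndepFinset G S ∧ S.card = m} := by
      refine ⟨Fintype.card V, fun m hm => ?_⟩
      obtain ⟨S, _, rfl⟩ := hm
      exact S.card_le_univ
    exact Nat.sSup_mem hne hbdd
  obtain ⟨D, hD, hDcard⟩ : ∃ D : Finset V, IsDomFinset G D ∧ D.card = domNum G := by
    have hne : {m | ∃ D : Finset V, IsDomFinset G D ∧ D.card = m}.Nonempty :=
      ⟨(univ : Finset V).card, univ, fun v hv => absurd (mem_univ v) hv, rfl⟩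
    exact Nat.sInf_mem hne
  rw [← hScard, ← hDcard]
  -- Step 1 : (d+2) * |S| ≤ 2 * n
  have h1 : (d + 2) * S.card ≤ 2 * Fintype.card V := by
    have key : ∑ s ∈ S, ∑ v ∈ Sᶜ, (if G.Adj s v then 1 else 0)
        = ∑ v ∈ Sᶜ, ∑ s ∈ S, (if G.Adj s v then 1 else 0) := Finset.sum_comm
    have hleft : ∀ s ∈ S, ∑ v ∈ Sᶜ, (if G.Adj s v then 1 else 0) = d := by
      intro s hs
      rw [← Finset.sum_filter]
      have hfil : Sᶜ.filter (fun v => G.Adj s v) = G.neighborFinset s := by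
        ext v
        simp only [mem_filter, mem_compl, SimpleGraph.mem_neighborFinset]
        constructor
        · rintro ⟨_, h⟩; exact h
        · intro h
          exact ⟨fun hv => hS s hs v hv h, h⟩
      rw [hfil, Finset.sum_const, smul_eq_mul, mul_one,
        SimpleGraph.card_neighborFinset_eq_degree, hreg s]
    have hright : ∀ v ∈ Sᶜ, ∑ s ∈ S, (if G.Adj s v then 1 else 0) ≤ 2 := by
      intro v _
      rw [← Finset.sum_filter, Finset.sum_const, smul_eq_mul, mul_one]
      by_contra hcon
      push_neg at hcon
      obtain ⟨A, hAsub, hAcard⟩ := Finset.exists_subset_card_eq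
        (s := S.filter (fun s => G.Adj s v)) (n := 3) hcon
      refine hG ⟨v, A, ?_, ?_, hAcard⟩
      · intro a ha
        exact ((Finset.mem_filter.mp (hAsub ha)).2).symm
      · intro a ha b hb hab
        exact hS a (mem_filter.mp (hAsub ha)).1 b (mem_filter.mp (hAsub hb)).1
    have hL : ∑ s ∈ S, ∑ v ∈ Sᶜ, (if G.Adj s v then 1 else 0) = d * S.card := by
      rw [Finset.sum_congr rfl hleft, Finset.sum_const, smul_eq_mul, mul_comm]
    have hR : ∑ v ∈ Sᶜ, ∑ s ∈ S, (if G.Adj s v then 1 else 0) ≤ 2 * Sᶜ.card := by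
      calc ∑ v ∈ Sᶜ, ∑ s ∈ S, (if G.Adj s v then 1 else 0)
          ≤ ∑ _v ∈ Sᶜ, 2 := Finset.sum_le_sum hright
        _ = 2 * Sᶜ.card := by rw [Finset.sum_const, smul_eq_mul, mul_comm]
      
    have hmain : d * S.card ≤ 2 * Sᶜ.card := by rw [← hL, key]; exact hR
    have hcompl : Sᶜ.card = Fintype.card V - S.card := Finset.card_compl S
    have hle : S.card ≤ Fintype.card V := S.card_le_univ
    have hsplit : (d + 2) * S.card = d * S.card + 2 * S.card := by ring
    rw [hsplit]
    have : d * S.card + 2 * S.card ≤ 2 * Sᶜ.card + 2 * S.card :=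
      Nat.add_le_add_right hmain _
    refine this.trans (le_of_eq ?_)
    rw [hcompl]
    omega
  -- Step 2 : n ≤ (d+1) * |D|
  have h2 : Fintype.card V ≤ (d + 1) * D.card := by
    have hsub : (univ : Finset V) ⊆ D ∪ D.biUnion (fun u => G.neighborFinset u) := by
      intro v _
      by_cases hv : v ∈ D
      · exact mem_union_left _ hv
      · obtain ⟨u, hu, hadj⟩ := hD v hv
        exact mem_union_right _ (mem_biUnion.mpr ⟨u, hu,
          (SimpleGraph.mem_neighborFinset G u v).mpr hadj⟩)
    calc Fintype.card V = (univ : Finset V).card := (Finset.card_univ).symm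
      _ ≤ (D ∪ D.biUnion (fun u => G.neighborFinset u)).card := card_le_card hsub
      _ ≤ D.card + (D.biUnion (fun u => G.neighborFinset u)).card := card_union_le _ _
      _ ≤ D.card + ∑ u ∈ D, (G.neighborFinset u).card :=
          Nat.add_le_add_left (Finset.card_biUnion_le) _
      _ = D.card + ∑ _u ∈ D, d := by
          congr 1
          exact Finset.sum_congr rfl fun u _ => by
            rw [SimpleGraph.card_neighborFinset_eq_degree, hreg u]
      _ = (d + 1) * D.card := by rw [Finset.sum_const, smul_eq_mul]; ring
  calc (d + 2) * S.card ≤ 2 * Fintype.card V := h1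
    _ ≤ 2 * ((d + 1) * D.card) := Nat.mul_le_mul_left 2 h2
    _ = 2 * (d + 1) * D.card := by ring
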